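/- With the setting of the previous output formula, suppose there exist M, ω > 0 with ‖y(t)‖_{ℝ^q} ≤ M e^{-ωt}‖x_0‖ for all x_0 ∈ Z and t ≥ 0. If n_0 ∈ K satisfies μ_{n_0} ≥ 0 and the μ_n are pairwise distinct, then ⟨f_k, φ_{n_0 j}⟩ = 0 for all k = 1,…,q and j = 1,…,r_{n_0}; equivalently the observation matrix T_{n_0} = (⟨f_k, φ_{n_0 j}⟩)_{k,j} is zero, i.e., Im T_{n_0} = {0}. -/

import Mathlib

open scoped RealInnerProductSpace

/-- necessity — if the output decays exponentially, uniformly in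
`x₀`, and `n₀ ∈ K` has `μ_{n₀} ≥ 0`, then all sensor coefficients at mode `n₀`
vanish, i.e. the observation matrix `T_{n₀}` is zero. -/
theorem sensor_coeffs_vanish_of_output_stable
    {Z : Type*} [NormedAddCommGroup Z] [InnerProductSpace ℝ Z] [CompleteSpace Z]
    (r : ℕ → ℕ) (φ : (Σ n : ℕ, Fin (r n)) → Z) (hφ : Orthonormal ℝ φ)
    (μ : ℕ → ℝ) (hdist : Function.Injective μ)
    (q : ℕ) (f : Fin q → Z) (K : Set ℕ)
    (y : Z → ℝ → EuclideanSpace ℝ (Fin q))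
    (hy : ∀ x₀ t k, y x₀ t k = ∑' (i : (Σ n : K, Fin (r n))),
        Real.exp (μ i.1 * t) * (⟪x₀, φ ⟨i.1, i.2⟩⟫ * ⟪f k, φ ⟨i.1, i.2⟩⟫))
    (M ω : ℝ) (hM : 0 < M) (hω : 0 < ω)
    (hstab : ∀ x₀ : Z, ∀ t : ℝ, 0 ≤ t → ‖y x₀ t‖ ≤ M * Real.exp (-ω * t) * ‖x₀‖)
    (n₀ : ℕ) (hn₀ : n₀ ∈ K) (hμn₀ : 0 ≤ μ n₀) :
    ∀ k : Fin q, ∀ j : Fin (r n₀), ⟪f k, φ ⟨n₀, j⟩⟫ = 0 := by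
  intro k j
  set c : ℝ := ⟪f k, φ ⟨n₀, j⟩⟫ with hc
  set x₀ : Z := φ ⟨n₀, j⟩ with hx₀
  have hnorm : ‖x₀‖ = 1 := hφ.1 _
  set i₀ : (Σ n : K, Fin (r n)) := ⟨⟨n₀, hn₀⟩, j⟩ with hi₀
  have hterm : ∀ t, y x₀ t k = Real.exp (μ n₀ * t) * c := by
    intro t
    rw [hy]
    rw [tsum_eq_single i₀]
    · have : ⟪x₀, φ ⟨(i₀.1 : ℕ), i₀.2⟩⟫ = 1 := by
        rw [hx₀, orthonormal_iff_ite.mp hφ]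
        simp [hi₀]
        rfl
      rw [this]; ring
    · intro i hi
      have hne : (⟨n₀, j⟩ : Σ n : ℕ, Fin (r n)) ≠ ⟨(i.1 : ℕ), i.2⟩ := by
        intro h
        apply hi
        obtain ⟨i1, i2⟩ := i
        obtain ⟨h1, h2⟩ := Sigma.mk.inj_iff.mp h
        have : (⟨n₀, hn₀⟩ : K) = i1 := Subtype.ext h1
        subst this
        cases eq_of_heq h2
        rfl
      have : ⟪x₀, φ ⟨(i.1 : ℕ), i.2⟩⟫ = 0 := by
        rw [hx₀, orthonormal_iff_ite.mp hφ, if_neg hne]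
      rw [this]; ring
  have hbound : ∀ t : ℝ, 0 ≤ t → |c| ≤ M * Real.exp (-ω * t) := by
    intro t ht
    have h1 : |y x₀ t k| ≤ ‖y x₀ t‖ := by
      have := EuclideanSpace.norm_eq (y x₀ t)
      rw [this]
      have hsum : |y x₀ t k| ^ 2 ≤ ∑ i, ‖y x₀ t i‖ ^ 2 := by
        have : ‖y x₀ t k‖ ^ 2 ≤ ∑ i, ‖y x₀ t i‖ ^ 2 :=
          Finset.single_le_sum (f := fun i => ‖y x₀ t i‖ ^ 2)
            (fun i _ => by positivity) (Finset.mem_univ k)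
        simpa [Real.norm_eq_abs] using this
      calc |y x₀ t k| = Real.sqrt (|y x₀ t k| ^ 2) := by
            rw [Real.sqrt_sq_eq_abs, abs_abs]
        _ ≤ Real.sqrt (∑ i, ‖y x₀ t i‖ ^ 2) := Real.sqrt_le_sqrt hsum
    have h2 : ‖y x₀ t‖ ≤ M * Real.exp (-ω * t) := by
      have := hstab x₀ t ht
      rwa [hnorm, mul_one] at this
    have h3 : |c| ≤ |c| * Real.exp (μ n₀ * t) := by
      nlinarith [Real.one_le_exp (mul_nonneg hμn₀ ht), abs_nonneg c]
    calc |c| ≤ |c| * Real.exp (μ n₀ * t) := h3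
      _ = |y x₀ t k| := by rw [hterm t, abs_mul, abs_of_pos (Real.exp_pos _)]; ring
      _ ≤ ‖y x₀ t‖ := h1
      _ ≤ M * Real.exp (-ω * t) := h2
  have hlim : Filter.Tendsto (fun t : ℝ => M * Real.exp (-ω * t)) Filter.atTop (nhds 0) := by
    have : Filter.Tendsto (fun t : ℝ => Real.exp (-ω * t)) Filter.atTop (nhds 0) := by
      apply Real.tendsto_exp_atBot.comp
      exact Filter.Tendsto.const_mul_atTop_of_neg (neg_neg_iff_pos.mpr hω) Filter.tendsto_id
    simpa using this.const_mul M
  have : |c| ≤ 0 :=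
    ge_of_tendsto hlim (Filter.eventually_atTop.mpr ⟨0, fun t ht => hbound t ht⟩)
  exact abs_nonpos_iff.mp this
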